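/- Let (w*, b*, u*) be a P-stationary point with parameter γ > 0 and associated multiplier λ* ∈ ℝ^m, and define the index set T* = {i : 0 < u*_i − γλ*_i ≤ √(2γC)}. Then T* = {i : −√(2C/γ) ≤ λ*_i < 0}; in particular λ*_i ∈ [−√(2C/γ), 0) for i ∈ T* and λ*_i = 0 for i ∉ T*. -/

import Mathlib

open Finset

noncomputable def l01norm {m : ℕ} (v : Fin m → ℝ) : ℕ :=
  (Finset.univ.filter fun i => 0 < v i).card

/-- `(w, b, u)` is a P-stationary point with parameter `γ > 0` and multiplier
`lam` of the problem `min (1/2)‖w‖² + C‖u₊‖₀ s.t. u + Aw + by = 1`. -/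
def IsPStationary {m n : ℕ} (A : Matrix (Fin m) (Fin n) ℝ) (y : Fin m → ℝ)
    (C γ : ℝ) (w : Fin n → ℝ) (b : ℝ) (u : Fin m → ℝ) (lam : Fin m → ℝ) : Prop :=
  (∀ j, w j + ∑ i, A i j * lam i = 0) ∧
  (∑ i, y i * lam i = 0) ∧
  (∀ i, u i + A.mulVec w i + b * y i = 1) ∧
  (∀ i, (0 < u i - γ * lam i ∧ u i - γ * lam i ≤ Real.sqrt (2 * γ * C)) →
      u i = 0) ∧
  (∀ i, ¬(0 < u i - γ * lam i ∧ u i - γ * lam i ≤ Real.sqrt (2 * γ * C)) →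
      u i = u i - γ * lam i)

lemma sqrt_div_eq (C γ : ℝ) (hγ : 0 < γ) :
    Real.sqrt (2 * γ * C) / γ = Real.sqrt (2 * C / γ) := by
  rw [eq_comm, show 2 * C / γ = 2 * γ * C / γ ^ 2 by field_simp,
    Real.sqrt_div' _ (by positivity), Real.sqrt_sq hγ.le]

/-- at a P-stationary point,
`T* = {i : −√(2C/γ) ≤ λ*_i < 0}`; in particular `λ*_i ∈ [−√(2C/γ), 0)` on `T*`
and `λ*_i = 0` off `T*`. -/
theorem PStationary_Tstar_multiplier_characterization {m n : ℕ}
    (x : Fin m → Fin n → ℝ) (y : Fin m → ℝ) (hy : ∀ i, y i = 1 ∨ y i = -1)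
    (A : Matrix (Fin m) (Fin n) ℝ) (hA : ∀ i j, A i j = y i * x i j)
    (C : ℝ) (hC : 0 < C) (γ : ℝ) (hγ : 0 < γ)
    (wstar : Fin n → ℝ) (bstar : ℝ) (ustar : Fin m → ℝ) (lam : Fin m → ℝ)
    (hstat : IsPStationary A y C γ wstar bstar ustar lam)
    (Tstar : Set (Fin m))
    (hT : Tstar = {i | 0 < ustar i - γ * lam i ∧
        ustar i - γ * lam i ≤ Real.sqrt (2 * γ * C)}) :
    Tstar = {i | -Real.sqrt (2 * C / γ) ≤ lam i ∧ lam i < 0} ∧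
    (∀ i ∈ Tstar, -Real.sqrt (2 * C / γ) ≤ lam i ∧ lam i < 0) ∧
    (∀ i ∉ Tstar, lam i = 0) := by
  obtain ⟨_, _, _, h4, h5⟩ := hstat
  have hoff : ∀ i ∉ Tstar, lam i = 0 := by
    intro i hi
    rw [hT] at hi
    have := h5 i hi
    nlinarith [this]
  have hon : ∀ i ∈ Tstar, -Real.sqrt (2 * C / γ) ≤ lam i ∧ lam i < 0 := by
    intro i hi
    rw [hT] at hi
    have hu := h4 i hi
    obtain ⟨h1, h2⟩ := hi
    rw [hu] at h1 h2
    constructor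
    · rw [neg_le, ← sqrt_div_eq C γ hγ, le_div_iff₀ hγ]
      linarith
    · nlinarith
  refine ⟨?_, hon, hoff⟩
  ext i
  simp only [Set.mem_setOf_eq]
  constructor
  · exact fun h => hon i h
  · intro ⟨h1, h2⟩
    by_contra hi
    exact absurd (hoff i hi) h2.ne
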